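/- arXiv:1710.04777 — 2 statements merged into one kernel-verified Lean document; each statement's English description precedes it below -/
import Mathlib

section
/- Let n ≥ 1, let A : ℝ^n → Sym_n(ℝ) with A(y) positive semidefinite for every y, and let H : ℝ^n × ℝ^n → ℝ be such that q ↦ H(q, y) is convex for every y. Fix p, q ∈ ℝ^n, t ∈ [0,1], and set r = t p + (1−t) q. Suppose w_p, w_q, w_r : ℝ^n → ℝ are C², ℤ^n-periodic functions and γ_p, γ_q, γ_r ∈ ℝ are real numbers such that −tr(A(y) D²w_s(y)) + H(∇w_s(y) + s, y) = γ_s for all y ∈ ℝ^n and each s ∈ {p, q, r}. Then γ_r ≤ t γ_p + (1−t) γ_q. (Convexity of the effective Hamiltonian.) -/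
open scoped InnerProductSpace

/-- The Hessian matrix of `w : ℝⁿ → ℝ` at `y`, with entries the iterated directional
derivatives along the standard basis vectors. -/
noncomputable def hessM {n : ℕ} (w : EuclideanSpace ℝ (Fin n) → ℝ)
    (y : EuclideanSpace ℝ (Fin n)) : Matrix (Fin n) (Fin n) ℝ :=
  fun i j =>
    fderiv ℝ (fun z => fderiv ℝ w z (EuclideanSpace.single j 1)) y (EuclideanSpace.single i 1)

/-- An integer vector `k ∈ ℤⁿ` viewed as an element of `ℝⁿ`. -/
noncomputable def intVec {n : ℕ} (k : Fin n → ℤ) : EuclideanSpace ℝ (Fin n) :=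
  (WithLp.equiv 2 (Fin n → ℝ)).symm (fun i => (k i : ℝ))

/-- A function on `ℝⁿ` is `ℤⁿ`-periodic. -/
def ZPeriodic {n : ℕ} (f : EuclideanSpace ℝ (Fin n) → ℝ) : Prop :=
  ∀ (y : EuclideanSpace ℝ (Fin n)) (k : Fin n → ℤ), f (y + intVec k) = f y

open Set Filter Topology Matrix

/-- If `A` is PSD and the quadratic form of `M` is nonpositive, then `tr (A M) ≤ 0`. -/
lemma trace_nonpos_aux {n : ℕ} {A M : Matrix (Fin n) (Fin n) ℝ}
    (hA : A.PosSemidef) (hM : ∀ u : Fin n → ℝ, u ⬝ᵥ (M *ᵥ u) ≤ 0) :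
    (A * M).trace ≤ 0 := by
  obtain ⟨B, rfl⟩ : ∃ B : Matrix (Fin n) (Fin n) ℝ, A = Bᴴ * B := by
    open scoped MatrixOrder Matrix.Norms.L2Operator in
    exact CStarAlgebra.nonneg_iff_eq_star_mul_self.mp hA.nonneg
  rw [Matrix.trace_mul_cycle, Matrix.trace_mul_cycle]
  have key : ∀ i, ((B * M) * Bᴴ) i i ≤ 0 := by
    intro i
    have h := hM (fun j => B i j)
    simp only [Matrix.mul_apply, Matrix.conjTranspose_apply, dotProduct, Matrix.mulVec,
      RCLike.star_def, starRingEnd_apply, star_trivial] at *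
    calc ∑ j, (∑ k, B i k * M k j) * B i j
        = ∑ j, ∑ k, B i k * (M k j * B i j) := by
          refine Finset.sum_congr rfl fun j _ => ?_
          rw [Finset.sum_mul]; exact Finset.sum_congr rfl fun k _ => by ring
      _ = ∑ k, ∑ j, B i k * (M k j * B i j) := Finset.sum_comm
      _ = ∑ k, B i k * ∑ j, M k j * B i j :=
          Finset.sum_congr rfl fun k _ => (Finset.mul_sum _ _ _).symm
      _ ≤ 0 := h
  calc ((B * M) * Bᴴ).trace = ∑ i, ((B * M) * Bᴴ) i i := rfl
    _ ≤ 0 := Finset.sum_nonpos fun i _ => key i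

/-- Second derivative test at a maximum. -/
lemma second_deriv_test_max {g g' : ℝ → ℝ} {a : ℝ}
    (hg : ∀ s, HasDerivAt g (g' s) s) (hg' : HasDerivAt g' a 0)
    (h0 : g' 0 = 0) (hmax : ∀ s, g s ≤ g 0) : a ≤ 0 := by
  by_contra hlt
  push_neg at hlt
  have hslope : Tendsto (slope g' 0) (𝓝[≠] 0) (𝓝 a) :=
    hasDerivAt_iff_tendsto_slope.mp hg'
  have hpos : ∀ᶠ s in 𝓝[>] (0:ℝ), 0 < slope g' 0 s := by
    have : ∀ᶠ s in 𝓝[≠] (0:ℝ), 0 < slope g' 0 s :=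
      hslope.eventually (eventually_gt_nhds hlt)
    exact this.filter_mono (nhdsWithin_mono _ fun x hx => ne_of_gt hx)
  obtain ⟨u, hu, hsub⟩ := mem_nhdsGT_iff_exists_Ioo_subset.mp hpos
  have hu0 : (0:ℝ) < u := hu
  have hder : ∀ s ∈ Ioo (0:ℝ) u, 0 < g' s := by
    intro s hs
    have h1 : 0 < slope g' 0 s := hsub hs
    have h2 : slope g' 0 s = g' s / s := by simp [slope_def_field, h0]
    rw [h2] at h1
    exact (div_pos_iff.mp h1).resolve_right
      (fun ⟨_, h⟩ => absurd hs.1 (not_lt.mpr h.le)) |>.1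
  have hcont : ContinuousOn g (Icc 0 u) :=
    fun s _ => ((hg s).continuousAt).continuousWithinAt
  have hmono : StrictMonoOn g (Icc (0:ℝ) u) := by
    refine strictMonoOn_of_deriv_pos (convex_Icc 0 u) hcont ?_
    intro s hs
    rw [interior_Icc] at hs
    rw [(hg s).deriv]
    exact hder s hs
  have : g 0 < g u := hmono (left_mem_Icc.mpr hu0.le) (right_mem_Icc.mpr hu0.le) hu0
  exact absurd (hmax u) (not_le.mpr this)

/-- A continuous `ℤⁿ`-periodic function attains its maximum. -/
lemma zperiodic_exists_max {n : ℕ} {v : EuclideanSpace ℝ (Fin n) → ℝ}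
    (hv : Continuous v) (hper : ZPeriodic v) :
    ∃ y₀, ∀ y, v y ≤ v y₀ := by
  have hK : IsCompact (Metric.closedBall (0 : EuclideanSpace ℝ (Fin n)) n) :=
    isCompact_closedBall _ _
  obtain ⟨y₀, hy₀K, hy₀⟩ := hK.exists_isMaxOn ⟨0, by simp⟩ hv.continuousOn
  refine ⟨y₀, fun y => ?_⟩
  set k : Fin n → ℤ := fun i => -⌊y i⌋ with hk
  have hcoord : ∀ i, (y + intVec k) i = Int.fract (y i) := by
    intro i
    have h : (y + intVec k) i = y i + ((-⌊y i⌋ : ℤ) : ℝ) := rfl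
    rw [h]
    push_cast
    rw [Int.fract]
    ring
  have hmem : y + intVec k ∈ Metric.closedBall (0 : EuclideanSpace ℝ (Fin n)) n := by
    rw [Metric.mem_closedBall, dist_zero_right]
    have h1 : ‖y + intVec k‖ ≤ Real.sqrt n := by
      rw [EuclideanSpace.norm_eq]
      apply Real.sqrt_le_sqrt
      calc ∑ i, ‖(y + intVec k) i‖ ^ 2 ≤ ∑ _i : Fin n, (1:ℝ) := by
            refine Finset.sum_le_sum fun i _ => ?_
            rw [hcoord i]
            have h0 := Int.fract_nonneg (y i)
            have h1 := Int.fract_lt_one (y i)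
            rw [Real.norm_eq_abs, abs_of_nonneg h0]
            nlinarith
        _ = n := by simp
    calc ‖y + intVec k‖ ≤ Real.sqrt n := h1
      _ ≤ n := (Real.sqrt_le_left (by positivity)).mpr
          (by exact_mod_cast Nat.le_self_pow two_ne_zero n)
  calc v y = v (y + intVec k) := (hper y k).symm
    _ ≤ v y₀ := hy₀ hmem

section calc1
variable {n : ℕ} {w : EuclideanSpace ℝ (Fin n) → ℝ}

lemma fderiv_cd2_diff (hw : ContDiff ℝ 2 w) :
    Differentiable ℝ (fderiv ℝ w) :=
  (hw.fderiv_right (m := 1) (by norm_num)).differentiable (by norm_num)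

lemma eval_fderiv_hasFDerivAt (hw : ContDiff ℝ 2 w) (u : EuclideanSpace ℝ (Fin n))
    (y : EuclideanSpace ℝ (Fin n)) :
    HasFDerivAt (fun z => fderiv ℝ w z u)
      ((ContinuousLinearMap.apply ℝ ℝ u).comp (fderiv ℝ (fderiv ℝ w) y)) y :=
  (ContinuousLinearMap.apply ℝ ℝ u).hasFDerivAt.comp y (fderiv_cd2_diff hw y).hasFDerivAt

lemma hess_entry (hw : ContDiff ℝ 2 w) (y : EuclideanSpace ℝ (Fin n)) (i j : Fin n) :
    hessM w y i j
      = fderiv ℝ (fderiv ℝ w) y (EuclideanSpace.single i 1) (EuclideanSpace.single j 1) := by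
  show fderiv ℝ (fun z => fderiv ℝ w z (EuclideanSpace.single j 1)) y
        (EuclideanSpace.single i 1) = _
  rw [(eval_fderiv_hasFDerivAt hw _ y).fderiv]
  rfl

end calc1

/-- Convexity of the effective Hamiltonian. -/
theorem effective_hamiltonian_convex
    (n : ℕ) (hn : 1 ≤ n)
    (A : EuclideanSpace ℝ (Fin n) → Matrix (Fin n) (Fin n) ℝ)
    (hAsymm : ∀ y, (A y).IsSymm) (hApsd : ∀ y, (A y).PosSemidef)
    (H : EuclideanSpace ℝ (Fin n) → EuclideanSpace ℝ (Fin n) → ℝ)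
    (hHconv : ∀ y, ConvexOn ℝ Set.univ (fun q => H q y))
    (p q : EuclideanSpace ℝ (Fin n)) (t : ℝ) (ht : t ∈ Set.Icc (0:ℝ) 1)
    (wp wq wr : EuclideanSpace ℝ (Fin n) → ℝ)
    (γp γq γr : ℝ)
    (hwp : ContDiff ℝ 2 wp) (hwq : ContDiff ℝ 2 wq) (hwr : ContDiff ℝ 2 wr)
    (hwpper : ZPeriodic wp) (hwqper : ZPeriodic wq) (hwrper : ZPeriodic wr)
    (heqp : ∀ y, -((A y) * hessM wp y).trace + H (gradient wp y + p) y = γp)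
    (heqq : ∀ y, -((A y) * hessM wq y).trace + H (gradient wq y + q) y = γq)
    (heqr : ∀ y, -((A y) * hessM wr y).trace
      + H (gradient wr y + (t • p + (1 - t) • q)) y = γr) :
    γr ≤ t * γp + (1 - t) * γq := by
  obtain ⟨ht0, ht1⟩ := ht
  -- the comparison function
  set v : EuclideanSpace ℝ (Fin n) → ℝ := fun y => t * wp y + (1 - t) * wq y - wr y with hv
  have hvc : ContDiff ℝ 2 v := ((contDiff_const.mul hwp).add (contDiff_const.mul hwq)).sub hwr
  have hvper : ZPeriodic v := by
    intro y k
    simp only [hv, hwpper y k, hwqper y k, hwrper y k]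
  obtain ⟨y₀, hy₀⟩ := zperiodic_exists_max hvc.continuous hvper
  have hdp : Differentiable ℝ wp := hwp.differentiable two_ne_zero
  have hdq : Differentiable ℝ wq := hwq.differentiable two_ne_zero
  have hdr : Differentiable ℝ wr := hwr.differentiable two_ne_zero
  have hdv : Differentiable ℝ v := hvc.differentiable two_ne_zero
  -- first derivative of v
  have hDv : ∀ z, fderiv ℝ v z
      = t • fderiv ℝ wp z + (1 - t) • fderiv ℝ wq z - fderiv ℝ wr z := by
    intro z
    have h1 : DifferentiableAt ℝ (fun y => t * wp y) z := (hdp z).const_mul t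
    have h2 : DifferentiableAt ℝ (fun y => (1 - t) * wq y) z := (hdq z).const_mul (1 - t)
    rw [show v = fun y => (t * wp y + (1 - t) * wq y) - wr y from rfl]
    rw [fderiv_fun_sub (f := fun y => t * wp y + (1 - t) * wq y) (h1.add h2) (hdr z),
      fderiv_fun_add h1 h2,
      fderiv_const_mul (hdp z), fderiv_const_mul (hdq z)]
  -- first order condition
  have hfd0 : fderiv ℝ v y₀ = 0 :=
    IsLocalMax.fderiv_eq_zero (Filter.Eventually.of_forall fun y => hy₀ y)
  -- gradient identity
  have hDr : fderiv ℝ wr y₀ = t • fderiv ℝ wp y₀ + (1 - t) • fderiv ℝ wq y₀ := by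
    have h := hDv y₀
    rw [hfd0] at h
    exact (sub_eq_zero.mp h.symm).symm
  have hgr : gradient wr y₀ = t • gradient wp y₀ + (1 - t) • gradient wq y₀ := by
    unfold gradient
    rw [hDr, map_add, _root_.map_smul, _root_.map_smul]
  -- second derivative of v at y₀
  set F := fderiv ℝ (fderiv ℝ v) y₀ with hF
  have hFat : HasFDerivAt (fderiv ℝ v) F y₀ := (fderiv_cd2_diff hvc y₀).hasFDerivAt
  -- the quadratic form of F is nonpositive
  have hquad : ∀ u' : EuclideanSpace ℝ (Fin n), F u' u' ≤ 0 := by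
    intro u'
    set c : ℝ → EuclideanSpace ℝ (Fin n) := fun s => y₀ + s • u' with hc
    have hcd : ∀ s, HasDerivAt c u' s := by
      intro s
      have := ((hasDerivAt_id s).smul_const u').const_add y₀
      simpa [hc] using this
    have hc0 : c 0 = y₀ := by simp [hc]
    have hg : ∀ s, HasDerivAt (fun s => v (c s)) (fderiv ℝ v (c s) u') s := fun s =>
      (hdv (c s)).hasFDerivAt.comp_hasDerivAt s (hcd s)
    have hg' : HasDerivAt (fun s => fderiv ℝ v (c s) u') (F u' u') 0 := by
      have h1 : HasFDerivAt (fun z => fderiv ℝ v z u')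
          ((ContinuousLinearMap.apply ℝ ℝ u').comp F) (c 0) := by
        rw [hc0]; exact eval_fderiv_hasFDerivAt hvc u' y₀
      have h2 := h1.comp_hasDerivAt 0 (hcd 0)
      simpa [Function.comp_def] using h2
    have h0 : fderiv ℝ v (c 0) u' = 0 := by rw [hc0, hfd0]; rfl
    have hmax : ∀ s, v (c s) ≤ v (c 0) := by
      intro s; rw [hc0]; exact hy₀ _
    exact second_deriv_test_max hg hg' h0 hmax
  -- quadratic form of the Hessian matrix of v is nonpositive
  have hMq : ∀ u : Fin n → ℝ, u ⬝ᵥ (hessM v y₀ *ᵥ u) ≤ 0 := by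
    intro u
    set u' : EuclideanSpace ℝ (Fin n) := ∑ i, u i • EuclideanSpace.single i (1:ℝ) with hu'
    have hdot : u ⬝ᵥ (hessM v y₀ *ᵥ u) = F u' u' := by
      simp only [dotProduct, Matrix.mulVec, hess_entry hvc y₀, hu', map_sum,
        _root_.map_smul, ContinuousLinearMap.sum_apply, ContinuousLinearMap.smul_apply,
        smul_eq_mul, Finset.mul_sum]
      rw [Finset.sum_comm]
      exact Finset.sum_congr rfl fun i _ => Finset.sum_congr rfl fun j _ => by ring
    rw [hdot]
    exact hquad u'
  -- the Hessian matrices combine linearly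
  have hFcomb : F = t • fderiv ℝ (fderiv ℝ wp) y₀ + (1 - t) • fderiv ℝ (fderiv ℝ wq) y₀
      - fderiv ℝ (fderiv ℝ wr) y₀ := by
    rw [hF, funext hDv]
    have h1 : DifferentiableAt ℝ (fun z => t • fderiv ℝ wp z) y₀ :=
      ((fderiv_cd2_diff hwp y₀).const_smul t)
    have h2 : DifferentiableAt ℝ (fun z => (1 - t) • fderiv ℝ wq z) y₀ :=
      ((fderiv_cd2_diff hwq y₀).const_smul (1 - t))
    rw [fderiv_fun_sub (f := fun z => t • fderiv ℝ wp z + (1 - t) • fderiv ℝ wq z) (h1.add h2)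
        (fderiv_cd2_diff hwr y₀), fderiv_fun_add h1 h2,
      fderiv_fun_const_smul (fderiv_cd2_diff hwp y₀), fderiv_fun_const_smul (fderiv_cd2_diff hwq y₀)]
  have hhesscomb : hessM v y₀
      = t • hessM wp y₀ + (1 - t) • hessM wq y₀ - hessM wr y₀ := by
    ext i j
    rw [hess_entry hvc y₀ i j, ← hF, hFcomb]
    simp only [Matrix.sub_apply, Matrix.add_apply, Matrix.smul_apply,
      ContinuousLinearMap.sub_apply, ContinuousLinearMap.add_apply,
      ContinuousLinearMap.smul_apply, hess_entry hwp y₀ i j, hess_entry hwq y₀ i j,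
      hess_entry hwr y₀ i j, smul_eq_mul]
  -- traces
  have htr : (A y₀ * hessM v y₀).trace ≤ 0 := trace_nonpos_aux (hApsd y₀) hMq
  have htrcomb : (A y₀ * hessM v y₀).trace
      = t * (A y₀ * hessM wp y₀).trace + (1 - t) * (A y₀ * hessM wq y₀).trace
        - (A y₀ * hessM wr y₀).trace := by
    rw [hhesscomb]
    rw [Matrix.mul_sub, Matrix.mul_add, Matrix.mul_smul, Matrix.mul_smul,
      Matrix.trace_sub, Matrix.trace_add, Matrix.trace_smul, Matrix.trace_smul]
    simp [smul_eq_mul]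
  -- convexity of H
  have hconvH : H (gradient wr y₀ + (t • p + (1 - t) • q)) y₀
      ≤ t * H (gradient wp y₀ + p) y₀ + (1 - t) * H (gradient wq y₀ + q) y₀ := by
    have harg : gradient wr y₀ + (t • p + (1 - t) • q)
        = t • (gradient wp y₀ + p) + (1 - t) • (gradient wq y₀ + q) := by
      rw [hgr, smul_add, smul_add]
      abel
    rw [harg]
    have h := (hHconv y₀).2 (Set.mem_univ (gradient wp y₀ + p))
      (Set.mem_univ (gradient wq y₀ + q)) ht0
      (by linarith : (0:ℝ) ≤ 1 - t) (by ring : t + (1 - t) = 1)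
    simpa [smul_eq_mul] using h
  -- conclude
  have hp := heqp y₀
  have hq := heqq y₀
  have hr := heqr y₀
  have hp' : -(t * (A y₀ * hessM wp y₀).trace) + t * H (gradient wp y₀ + p) y₀ = t * γp := by
    rw [← hp]; ring
  have hq' : -((1 - t) * (A y₀ * hessM wq y₀).trace)
      + (1 - t) * H (gradient wq y₀ + q) y₀ = (1 - t) * γq := by
    rw [← hq]; ring
  linarith [htr, htrcomb, hconvH, hp', hq', hr]
end

section
/- Let n ≥ 1, let A : ℝ^n → Sym_n(ℝ) with A(y) positive semidefinite for every y, and let B : ℝ^n → ℝ^n be a bounded function with ‖B(y)‖ ≤ b for all y. Fix p ∈ ℝ^n and γ ∈ ℝ. If v : ℝ^n → ℝ is a C², ℤ^n-periodic function satisfying −tr(A(y) D²v(y)) + B(y) · (∇v(y) + p) = γ for all y ∈ ℝ^n, then |γ| ≤ |p| · b. -/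
open scoped InnerProductSpace

/-- One-dimensional second-derivative necessary condition at a global maximum at `0`. -/
lemma sd_test (g g' g'' : ℝ → ℝ) (h1 : ∀ t, HasDerivAt g (g' t) t)
    (h2 : ∀ t, HasDerivAt g' (g'' t) t) (hc : Continuous g'')
    (hmax : ∀ t, g t ≤ g 0) : g'' 0 ≤ 0 := by
  by_contra hpos
  push_neg at hpos
  have hloc : IsLocalMax g 0 := Filter.Eventually.of_forall hmax
  have h0 : g' 0 = 0 := hloc.hasDerivAt_eq_zero (h1 0)
  have hev : ∀ᶠ t in nhds (0:ℝ), g'' t ∈ Set.Ioi 0 :=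
    hc.continuousAt.eventually_mem (Ioi_mem_nhds hpos)
  obtain ⟨δ, hδpos, hδ⟩ := Metric.eventually_nhds_iff.mp hev
  have hsub : ∀ t ∈ Set.Ioo (-δ) δ, 0 < g'' t := by
    intro t ht
    exact hδ (by rw [Real.dist_eq, sub_zero]; exact abs_lt.mpr ⟨ht.1, ht.2⟩)
  have hmono : StrictMonoOn g' (Set.Ioo (-δ) δ) :=
    strictMonoOn_of_deriv_pos (convex_Ioo _ _)
      (fun t _ => (h2 t).continuousAt.continuousWithinAt)
      (fun t ht => by
        rw [(h2 t).deriv]; exact hsub t (by rwa [interior_Ioo] at ht))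
  have hg'pos : ∀ t ∈ Set.Ioo 0 (δ/2), 0 < g' t := by
    intro t ht
    have h01 : (0:ℝ) ∈ Set.Ioo (-δ) δ := ⟨by linarith, hδpos⟩
    have h02 : t ∈ Set.Ioo (-δ) δ := ⟨by linarith [ht.1], by linarith [ht.2]⟩
    have := hmono h01 h02 ht.1
    linarith [h0]
  have hgmono : StrictMonoOn g (Set.Icc 0 (δ/2)) :=
    strictMonoOn_of_deriv_pos (convex_Icc _ _)
      (fun t _ => (h1 t).continuousAt.continuousWithinAt)
      (fun t ht => by
        rw [(h1 t).deriv]; exact hg'pos t (by rwa [interior_Icc] at ht))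
  have : g 0 < g (δ/2) :=
    hgmono ⟨le_rfl, by linarith⟩ ⟨by linarith, le_rfl⟩ (by linarith)
  exact absurd (hmax (δ/2)) (not_le.mpr this)

/-- A continuous `ℤⁿ`-periodic function attains a global maximum. -/
lemma exists_global_max {n : ℕ} (f : EuclideanSpace ℝ (Fin n) → ℝ)
    (hf : Continuous f) (hper : ZPeriodic f) : ∃ y₀, ∀ y, f y ≤ f y₀ := by
  set K : Set (EuclideanSpace ℝ (Fin n)) :=
    (EuclideanSpace.equiv (Fin n) ℝ) ⁻¹' (Set.univ.pi fun _ => Set.Icc (0:ℝ) 1) with hK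
  have hKc : IsCompact K := by
    rw [hK]
    exact ((EuclideanSpace.equiv (Fin n) ℝ).toHomeomorph.isCompact_preimage).mpr
      (isCompact_univ_pi fun _ => isCompact_Icc)
  have hKne : K.Nonempty := ⟨0, by intro i _; simp⟩
  obtain ⟨y₀, _, hy₀⟩ := hKc.exists_isMaxOn hKne hf.continuousOn
  refine ⟨y₀, fun y => ?_⟩
  set k : Fin n → ℤ := fun i => ⌊y i⌋ with hk
  have hxk : (y - intVec k) + intVec k = y := sub_add_cancel y (intVec k)
  have hmem : y - intVec k ∈ K := by
    intro i _
    have heq : (EuclideanSpace.equiv (Fin n) ℝ) (y - intVec k) i = Int.fract (y i) := by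
      simp only [EuclideanSpace.equiv, PiLp.continuousLinearEquiv_apply,
        PiLp.sub_apply, intVec, hk, Int.fract]
      rfl
    rw [heq]
    exact ⟨Int.fract_nonneg _, (Int.fract_lt_one _).le⟩
  calc f y = f ((y - intVec k) + intVec k) := by rw [hxk]
    _ = f (y - intVec k) := hper _ k
    _ ≤ f y₀ := hy₀ hmem

/-- At a global maximum of a `C²` function, the derivative vanishes and
`tr(A · D²w) ≤ 0` for any positive semidefinite `A`. -/
lemma max_point_props {n : ℕ} (A : Matrix (Fin n) (Fin n) ℝ) (hA : A.PosSemidef)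
    (w : EuclideanSpace ℝ (Fin n) → ℝ) (hw : ContDiff ℝ 2 w)
    (y₀ : EuclideanSpace ℝ (Fin n)) (hmax : ∀ y, w y ≤ w y₀) :
    fderiv ℝ w y₀ = 0 ∧ (A * hessM w y₀).trace ≤ 0 := by
  set F := fderiv ℝ w with hF
  have hF1 : ContDiff ℝ 1 F := hw.fderiv_right (by norm_num)
  have hdw : Differentiable ℝ w := hw.differentiable (by norm_num)
  have hdF : Differentiable ℝ F := hF1.differentiable (by norm_num)
  have hcF' : Continuous (fun z => fderiv ℝ F z) := hF1.continuous_fderiv (by norm_num)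
  have hloc : IsLocalMax w y₀ := Filter.Eventually.of_forall hmax
  have h0 : fderiv ℝ w y₀ = 0 := hloc.fderiv_eq_zero
  refine ⟨h0, ?_⟩
  have quad : ∀ u : EuclideanSpace ℝ (Fin n), fderiv ℝ F y₀ u u ≤ 0 := by
    intro u
    have hline : ∀ t : ℝ, HasDerivAt (fun s : ℝ => y₀ + s • u) u t := fun t => by
      simpa using ((hasDerivAt_id t).smul_const u).const_add y₀
    have h1 : ∀ t, HasDerivAt (fun s => w (y₀ + s • u)) (F (y₀ + t • u) u) t := fun t =>
      (hdw _).hasFDerivAt.comp_hasDerivAt t (hline t)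
    have h2 : ∀ t, HasDerivAt (fun s => F (y₀ + s • u) u)
        (fderiv ℝ F (y₀ + t • u) u u) t := fun t => by
      have hFd : HasDerivAt (fun s => F (y₀ + s • u)) (fderiv ℝ F (y₀ + t • u) u) t :=
        (hdF _).hasFDerivAt.comp_hasDerivAt t (hline t)
      exact (ContinuousLinearMap.apply ℝ ℝ u).hasFDerivAt.comp_hasDerivAt t hFd
    have hc : Continuous fun t : ℝ => fderiv ℝ F (y₀ + t • u) u u := by
      have hl : Continuous fun t : ℝ => y₀ + t • u :=
        continuous_const.add ((continuous_id : Continuous fun t : ℝ => t).smul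
          (continuous_const : Continuous fun _ : ℝ => u))
      exact ((hcF'.comp hl).clm_apply continuous_const).clm_apply continuous_const
    have hm : ∀ t, (fun s : ℝ => w (y₀ + s • u)) t ≤ (fun s : ℝ => w (y₀ + s • u)) 0 := by
      intro t; simp only [zero_smul, add_zero]; exact hmax _
    have := sd_test _ _ _ h1 h2 hc hm
    simpa using this
  have hessEq : ∀ i j, hessM w y₀ i j =
      fderiv ℝ F y₀ (EuclideanSpace.single i 1) (EuclideanSpace.single j 1) := by
    intro i j
    have h : HasFDerivAt (fun z => F z (EuclideanSpace.single j (1:ℝ)))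
        ((ContinuousLinearMap.apply ℝ ℝ (EuclideanSpace.single j (1:ℝ))).comp
          (fderiv ℝ F y₀)) y₀ :=
      (ContinuousLinearMap.apply ℝ ℝ (EuclideanSpace.single j (1:ℝ))).hasFDerivAt.comp y₀
        (hdF y₀).hasFDerivAt
    show fderiv ℝ (fun z => fderiv ℝ w z (EuclideanSpace.single j 1)) y₀
        (EuclideanSpace.single i 1) = _
    rw [← hF, h.fderiv]
    rfl
  have hexp : ∀ u : Fin n → ℝ,
      fderiv ℝ F y₀ ((WithLp.equiv 2 (Fin n → ℝ)).symm u)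
        ((WithLp.equiv 2 (Fin n → ℝ)).symm u)
      = ∑ i, ∑ j, u i * u j *
          fderiv ℝ F y₀ (EuclideanSpace.single i 1) (EuclideanSpace.single j 1) := by
    intro u
    set U : EuclideanSpace ℝ (Fin n) := (WithLp.equiv 2 (Fin n → ℝ)).symm u with hUdef
    have hU : U = ∑ i, u i • EuclideanSpace.single i (1:ℝ) := by
      have := ((EuclideanSpace.basisFun (Fin n) ℝ).sum_repr U).symm
      simpa [EuclideanSpace.basisFun_repr, EuclideanSpace.basisFun_apply, hUdef] using this
    rw [hU]
    simp only [map_sum, map_smul, ContinuousLinearMap.sum_apply,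
      ContinuousLinearMap.smul_apply, smul_eq_mul, Finset.mul_sum]
    rw [Finset.sum_comm]
    apply Finset.sum_congr rfl; intro i _
    apply Finset.sum_congr rfl; intro j _
    ring
  have htr : ∀ u : Fin n → ℝ, ∑ i, ∑ j, u i * u j * (hessM w y₀) i j ≤ 0 := by
    intro u
    simp only [hessEq]
    rw [← hexp u]
    exact quad _
  obtain ⟨C, rfl⟩ : ∃ C : Matrix (Fin n) (Fin n) ℝ, A = C.conjTranspose * C := by
    classical
    open scoped MatrixOrder in
    exact CStarAlgebra.nonneg_iff_eq_star_mul_self.mp hA.nonneg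
  rw [Matrix.mul_assoc, Matrix.trace_mul_comm]
  have hcalc : ((C * hessM w y₀) * C.conjTranspose).trace
      = ∑ k, ∑ i, ∑ j, C k i * C k j * (hessM w y₀) i j := by
    simp only [Matrix.trace, Matrix.diag_apply, Matrix.mul_apply,
      Matrix.conjTranspose_apply, star_trivial, Finset.sum_mul, Finset.mul_sum]
    refine Finset.sum_congr rfl fun k _ => ?_
    rw [Finset.sum_comm]
    refine Finset.sum_congr rfl fun i _ => Finset.sum_congr rfl fun j _ => by ring
  rw [hcalc]
  exact Finset.sum_nonpos fun k _ => htr (fun i => C k i)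

/-- Bound on the effective value of the linear cell problem with bounded drift. -/
theorem linear_cell_value_bound
    (n : ℕ) (hn : 1 ≤ n)
    (A : EuclideanSpace ℝ (Fin n) → Matrix (Fin n) (Fin n) ℝ)
    (hAsymm : ∀ y, (A y).IsSymm) (hApsd : ∀ y, (A y).PosSemidef)
    (B : EuclideanSpace ℝ (Fin n) → EuclideanSpace ℝ (Fin n))
    (b : ℝ) (hB : ∀ y, ‖B y‖ ≤ b)
    (p : EuclideanSpace ℝ (Fin n)) (γ : ℝ)
    (v : EuclideanSpace ℝ (Fin n) → ℝ)
    (hv : ContDiff ℝ 2 v) (hvper : ZPeriodic v)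
    (heq : ∀ y, -((A y) * hessM v y).trace + ⟪B y, gradient v y + p⟫_ℝ = γ) :
    |γ| ≤ ‖p‖ * b := by
  obtain ⟨y₀, hy₀⟩ := exists_global_max v hv.continuous hvper
  obtain ⟨hf0, htr0⟩ := max_point_props (A y₀) (hApsd y₀) v hv y₀ hy₀
  have hg0 : gradient v y₀ = 0 := by
    rw [gradient, hf0]; simp
  have hnegper : ZPeriodic (fun y => -(v y)) := fun y k => by simp [hvper y k]
  obtain ⟨y₁, hy₁⟩ := exists_global_max (fun y => -(v y)) hv.continuous.neg hnegper
  obtain ⟨hf1, htr1⟩ := max_point_props (A y₁) (hApsd y₁) (fun y => -(v y)) hv.neg y₁ hy₁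
  have hf1' : fderiv ℝ v y₁ = 0 := by
    rw [fderiv_fun_neg] at hf1; exact neg_eq_zero.mp hf1
  have hg1 : gradient v y₁ = 0 := by
    rw [gradient, hf1']; simp
  have hhneg : hessM (fun y => -(v y)) y₁ = -(hessM v y₁) := by
    funext i j
    show fderiv ℝ (fun z => fderiv ℝ (fun y => -(v y)) z (EuclideanSpace.single j 1)) y₁
        (EuclideanSpace.single i 1) = _
    simp only [fderiv_fun_neg, ContinuousLinearMap.neg_apply]
    simp [hessM, Matrix.neg_apply]
  have htr1' : 0 ≤ ((A y₁) * hessM v y₁).trace := by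
    rw [hhneg, Matrix.mul_neg, Matrix.trace_neg] at htr1
    linarith
  have e0 := heq y₀
  rw [hg0, zero_add] at e0
  have e1 := heq y₁
  rw [hg1, zero_add] at e1
  have hi0 : |⟪B y₀, p⟫_ℝ| ≤ ‖p‖ * b := by
    calc |⟪B y₀, p⟫_ℝ| ≤ ‖B y₀‖ * ‖p‖ := abs_real_inner_le_norm _ _
      _ ≤ b * ‖p‖ := mul_le_mul_of_nonneg_right (hB y₀) (norm_nonneg p)
      _ = ‖p‖ * b := mul_comm _ _
  have hi1 : |⟪B y₁, p⟫_ℝ| ≤ ‖p‖ * b := by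
    calc |⟪B y₁, p⟫_ℝ| ≤ ‖B y₁‖ * ‖p‖ := abs_real_inner_le_norm _ _
      _ ≤ b * ‖p‖ := mul_le_mul_of_nonneg_right (hB y₁) (norm_nonneg p)
      _ = ‖p‖ * b := mul_comm _ _
  rw [abs_le]
  constructor
  · have := (abs_le.mp hi0).1
    linarith
  · have := (abs_le.mp hi1).2
    linarith
end
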